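/- If G = K_{n_1,…,n_k} is the complete multipartite graph of order n with k even and n_i = n/k for all 1 ≤ i ≤ k, then α(T_2(G)) = n²/(2k). -/

import Mathlib

/-- The `k`-token graph of `G`: vertices are the `k`-subsets of `V(G)`, two subsets
adjacent iff their symmetric difference is an edge of `G`. -/
def tokenGraph {V : Type*} [DecidableEq V] (G : SimpleGraph V) (k : ℕ) :
    SimpleGraph {s : Finset V // s.card = k} where
  Adj A B := ∃ a b, G.Adj a b ∧ symmDiff A.1 B.1 = {a, b}
  symm := by
    refine ⟨?_⟩
    rintro A B ⟨a, b, hab, h⟩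
    exact ⟨b, a, hab.symm, by rw [symmDiff_comm, h, Finset.pair_comm]⟩
  loopless := by
    refine ⟨?_⟩
    rintro A ⟨a, b, hab, h⟩
    rw [symmDiff_self] at h
    exact (Finset.insert_ne_empty a {b}) (by simpa using h.symm)

/-- A set of vertices is independent if no two of its members are adjacent. -/
def IndepSet {W : Type*} (G : SimpleGraph W) (s : Set W) : Prop :=
  s.Pairwise fun a b => ¬ G.Adj a b

/-- The independence number of a finite graph. -/
noncomputable def indepNum {W : Type*} [Fintype W] (G : SimpleGraph W) : ℕ := by
  classical exact Finset.univ.sup fun s : Finset W => if IndepSet G ↑s then s.card else 0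

/-- A graph is well-covered if all its maximal independent sets have the same cardinality. -/
def WellCovered {W : Type*} (G : SimpleGraph W) : Prop :=
  ∀ s t : Set W, Maximal (IndepSet G) s → Maximal (IndepSet G) t → s.ncard = t.ncard

-- aux
lemma three_mem_pair {α : Type*} [DecidableEq α] {a b u v w : α}
    (hu : u ∈ ({a, b} : Finset α)) (hv : v ∈ ({a, b} : Finset α))
    (hw : w ∈ ({a, b} : Finset α)) (huv : u ≠ v) (huw : u ≠ w) (hvw : v ≠ w) : False := by
  simp only [Finset.mem_insert, Finset.mem_singleton] at hu hv hw
  rcases hu with rfl | rfl <;> rcases hv with rfl | rfl <;> rcases hw with rfl | rfl <;> simp_all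

section UB
variable (k m : ℕ)

abbrev Vt := (_ : Fin k) × Fin m
abbrev Gt : SimpleGraph (Vt k m) := SimpleGraph.completeMultipartiteGraph (fun _ : Fin k => Fin m)

lemma upper (s : Finset {t : Finset (Vt k m) // t.card = 2})
    (hs : IndepSet (tokenGraph (Gt k m) 2) ↑s) :
    2 * s.card ≤ k * m * m := by
  classical
  have key : ∀ v : Vt k m, (s.filter fun A => v ∈ A.1).card ≤ m := by
    intro v
    set F := s.filter fun A => v ∈ A.1 with hF
    have hoth : ∀ A ∈ F, ∃ x : Vt k m, A.1.erase v = {x} ∧ x ≠ v ∧ A.1 = {v, x} := by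
      intro A hA
      rw [hF, Finset.mem_filter] at hA
      have h1 : (A.1.erase v).card = 1 := by
        rw [Finset.card_erase_of_mem hA.2, A.2]
      obtain ⟨x, hx⟩ := Finset.card_eq_one.mp h1
      refine ⟨x, hx, ?_, ?_⟩
      · have : x ∈ A.1.erase v := by rw [hx]; exact Finset.mem_singleton_self x
        exact (Finset.mem_erase.mp this).1
      · rw [← Finset.insert_erase hA.2, hx]
    have hinj : ∀ A ∈ F, ∀ B ∈ F,
        ((A.1.erase v).sup fun x => x.2.val) = ((B.1.erase v).sup fun x => x.2.val) → A = B := by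
      intro A hA B hB heq
      obtain ⟨xA, heA, hxAv, hAeq⟩ := hoth A hA
      obtain ⟨xB, heB, hxBv, hBeq⟩ := hoth B hB
      rw [heA, heB] at heq
      simp only [Finset.sup_singleton] at heq
      by_contra hne
      have hxne : xA ≠ xB := by
        intro h; apply hne; apply Subtype.ext; rw [hAeq, hBeq, h]
      have hfst : xA.1 ≠ xB.1 := by
        intro h
        exact hxne (Sigma.ext h (heq_of_eq (Fin.ext heq)))
      have hadj : (tokenGraph (Gt k m) 2).Adj A B := by
        refine ⟨xA, xB, hfst, ?_⟩
        ext z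
        simp only [Finset.mem_symmDiff, hAeq, hBeq, Finset.mem_insert, Finset.mem_singleton]
        constructor
        · rintro (⟨rfl | rfl, h2⟩ | ⟨rfl | rfl, h2⟩) <;> tauto
        · rintro (rfl | rfl)
          · exact Or.inl ⟨Or.inr rfl, by push_neg; exact ⟨hxAv, hxne⟩⟩
          · exact Or.inr ⟨Or.inr rfl, by push_neg; exact ⟨hxBv, fun h => hxne h.symm⟩⟩
      have hAs : A ∈ s := (Finset.mem_filter.mp hA).1
      have hBs : B ∈ s := (Finset.mem_filter.mp hB).1
      exact hs hAs hBs hne hadj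
    calc F.card ≤ (Finset.range m).card := by
          apply Finset.card_le_card_of_injOn (fun A => (A.1.erase v).sup fun x => x.2.val)
          · intro A hA
            obtain ⟨xA, heA, _, _⟩ := hoth A hA
            rw [Finset.mem_coe]; simp only [heA]
            simp only [Finset.sup_singleton, Finset.mem_range]
            exact xA.2.isLt
          · intro A hA B hB h
            exact hinj A hA B hB h
      _ = m := Finset.card_range m
  have h1 : ∑ A ∈ s, (A.1.card) = ∑ v : Vt k m, (s.filter fun A => v ∈ A.1).card := by
    simp_rw [Finset.card_filter]
    rw [Finset.sum_comm]
    refine Finset.sum_congr rfl fun A _ => ?_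
    rw [Finset.sum_ite_mem]
    simp
  have h2 : ∑ A ∈ s, (A.1.card) = 2 * s.card := by
    rw [Finset.sum_congr rfl fun A _ => A.2, Finset.sum_const, smul_eq_mul, mul_comm]
  have h3 : ∑ v : Vt k m, (s.filter fun A => v ∈ A.1).card ≤ k * m * m := by
    calc ∑ v : Vt k m, (s.filter fun A => v ∈ A.1).card ≤ ∑ _v : Vt k m, m :=
          Finset.sum_le_sum fun v _ => key v
      _ = k * m * m := by simp [Fintype.card_sigma, mul_comm]
  omega
end UB

section LB
variable (k m c : ℕ)

-- the two vertices of a pair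
def pv1 (hc : k = c + c) (i : Fin c) (x : Fin m) : Vt k m :=
  ⟨⟨2 * i.1, by omega⟩, x⟩
def pv2 (hc : k = c + c) (i : Fin c) (y : Fin m) : Vt k m :=
  ⟨⟨2 * i.1 + 1, by have := i.2; omega⟩, y⟩

lemma pv_ne (hc : k = c + c) (i i' : Fin c) (x y : Fin m) : pv1 k m c hc i x ≠ pv2 k m c hc i' y := by
  intro h
  have := congrArg (fun z : Vt k m => z.1.1) h
  simp only [pv1, pv2] at this
  omega

lemma pv1_inj (hc : k = c + c) {i i' : Fin c} {x x' : Fin m} (h : pv1 k m c hc i x = pv1 k m c hc i' x') :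
    i = i' ∧ x = x' := by
  have h1 := congrArg (fun z : Vt k m => z.1.1) h
  simp only [pv1] at h1
  have hi : i = i' := by ext; omega
  subst hi
  refine ⟨rfl, ?_⟩
  simpa [pv1, Sigma.ext_iff] using h

lemma pv2_inj (hc : k = c + c) {i i' : Fin c} {y y' : Fin m} (h : pv2 k m c hc i y = pv2 k m c hc i' y') :
    i = i' ∧ y = y' := by
  have h1 := congrArg (fun z : Vt k m => z.1.1) h
  simp only [pv2] at h1
  have hi : i = i' := by ext; omega
  subst hi
  refine ⟨rfl, ?_⟩
  simpa [pv2, Sigma.ext_iff] using h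

lemma pv1_ne_pv1 (hc : k = c + c) {i i' : Fin c} {x x' : Fin m} (h : i ≠ i' ∨ x ≠ x') :
    pv1 k m c hc i x ≠ pv1 k m c hc i' x' := by
  intro he
  obtain ⟨h1, h2⟩ := pv1_inj k m c hc he
  tauto

lemma pv2_ne_pv2 (hc : k = c + c) {i i' : Fin c} {y y' : Fin m} (h : i ≠ i' ∨ y ≠ y') :
    pv2 k m c hc i y ≠ pv2 k m c hc i' y' := by
  intro he
  obtain ⟨h1, h2⟩ := pv2_inj k m c hc he
  tauto

noncomputable def pf (hc : k = c + c) (p : Fin c × Fin m × Fin m) : {t : Finset (Vt k m) // t.card = 2} :=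
  ⟨{pv1 k m c hc p.1 p.2.1, pv2 k m c hc p.1 p.2.2},
    Finset.card_pair (pv_ne k m c hc _ _ _ _)⟩

lemma pf_inj (hc : k = c + c) : Function.Injective (pf k m c hc) := by
  intro p q h
  obtain ⟨i, x, y⟩ := p
  obtain ⟨i', x', y'⟩ := q
  have h' : ({pv1 k m c hc i x, pv2 k m c hc i y} : Finset (Vt k m))
      = {pv1 k m c hc i' x', pv2 k m c hc i' y'} := congrArg Subtype.val h
  have h1 : pv1 k m c hc i x ∈ ({pv1 k m c hc i' x', pv2 k m c hc i' y'} : Finset (Vt k m)) := by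
    rw [← h']; simp
  have h2 : pv2 k m c hc i y ∈ ({pv1 k m c hc i' x', pv2 k m c hc i' y'} : Finset (Vt k m)) := by
    rw [← h']; simp
  simp only [Finset.mem_insert, Finset.mem_singleton] at h1 h2
  have e1 : pv1 k m c hc i x = pv1 k m c hc i' x' := by
    rcases h1 with h1 | h1
    · exact h1
    · exact absurd h1 (pv_ne k m c hc _ _ _ _)
  have e2 : pv2 k m c hc i y = pv2 k m c hc i' y' := by
    rcases h2 with h2 | h2
    · exact absurd h2.symm (pv_ne k m c hc _ _ _ _)
    · exact h2
  obtain ⟨hi, hx⟩ := pv1_inj k m c hc e1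
  obtain ⟨_, hy⟩ := pv2_inj k m c hc e2
  subst hi; subst hx; subst hy; rfl

lemma lower_indep (hc : k = c + c) :
    IndepSet (tokenGraph (Gt k m) 2) ↑(Finset.image (pf k m c hc) Finset.univ) := by
  intro A hA B hB hne hadj
  simp only [Finset.coe_image, Set.mem_image, Finset.coe_univ, Set.image_univ,
    Set.mem_range] at hA hB
  obtain ⟨⟨i, x, y⟩, rfl⟩ := hA
  obtain ⟨⟨i', x', y'⟩, rfl⟩ := hB
  obtain ⟨a, b, hab, hsd⟩ := hadj
  have hab' : a.1 ≠ b.1 := hab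
  set u1 := pv1 k m c hc i x with hu1
  set u2 := pv2 k m c hc i y with hu2
  set w1 := pv1 k m c hc i' x' with hw1
  set w2 := pv2 k m c hc i' y' with hw2
  have hApair : (pf k m c hc (i, x, y)).1 = {u1, u2} := rfl
  have hBpair : (pf k m c hc (i', x', y')).1 = {w1, w2} := rfl
  rw [hApair, hBpair] at hsd
  -- membership characterization
  have memsd : ∀ z : Vt k m, z ∈ ({a, b} : Finset (Vt k m)) ↔
      (z ∈ ({u1, u2} : Finset (Vt k m)) ∧ z ∉ ({w1, w2} : Finset (Vt k m))) ∨
      (z ∈ ({w1, w2} : Finset (Vt k m)) ∧ z ∉ ({u1, u2} : Finset (Vt k m))) := by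
    intro z
    rw [← hsd, Finset.mem_symmDiff]
  by_cases hii : i = i'
  · subst hii
    have hpq : ¬(x = x' ∧ y = y') := by
      intro ⟨hx, hy⟩; subst hx; subst hy; exact hne rfl
    by_cases hxx : x = x'
    · subst hxx
      have hyy : y ≠ y' := fun h => hpq ⟨rfl, h⟩
      -- a, b ∈ {u2, w2}, both with first coord 2i+1
      have hch : ∀ z ∈ ({a, b} : Finset (Vt k m)), z = u2 ∨ z = w2 := by
        intro z hz
        rw [memsd] at hz
        simp only [Finset.mem_insert, Finset.mem_singleton, not_or] at hz
        rcases hz with ⟨h1 | h1, h2⟩ | ⟨h1 | h1, h2⟩ <;> tauto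
      have ha := hch a (by simp)
      have hb := hch b (by simp)
      apply hab'
      have e2 : u2.1 = w2.1 := rfl
      rcases ha with rfl | rfl <;> rcases hb with rfl | rfl <;> simp [e2]
    · by_cases hyy : y = y'
      · subst hyy
        have hch : ∀ z ∈ ({a, b} : Finset (Vt k m)), z = u1 ∨ z = w1 := by
          intro z hz
          rw [memsd] at hz
          simp only [Finset.mem_insert, Finset.mem_singleton, not_or] at hz
          rcases hz with ⟨h1 | h1, h2⟩ | ⟨h1 | h1, h2⟩ <;> tauto
        have ha := hch a (by simp)
        have hb := hch b (by simp)
        apply hab'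
        have e2 : u1.1 = w1.1 := rfl
        rcases ha with rfl | rfl <;> rcases hb with rfl | rfl <;> simp [e2]
      · -- x ≠ x', y ≠ y' : symmDiff has ≥ 3 distinct elements
        have m1 : u1 ∈ ({a, b} : Finset (Vt k m)) := by
          rw [memsd]
          left
          constructor
          · simp
          · simp only [Finset.mem_insert, Finset.mem_singleton, not_or]
            exact ⟨pv1_ne_pv1 k m c hc (Or.inr hxx), pv_ne k m c hc _ _ _ _⟩
        have m2 : u2 ∈ ({a, b} : Finset (Vt k m)) := by
          rw [memsd]
          left
          constructor
          · simp
          · simp only [Finset.mem_insert, Finset.mem_singleton, not_or]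
            exact ⟨fun h => pv_ne k m c hc _ _ _ _ h.symm, pv2_ne_pv2 k m c hc (Or.inr hyy)⟩
        have m3 : w1 ∈ ({a, b} : Finset (Vt k m)) := by
          rw [memsd]
          right
          constructor
          · simp
          · simp only [Finset.mem_insert, Finset.mem_singleton, not_or]
            exact ⟨pv1_ne_pv1 k m c hc (Or.inr (Ne.symm hxx)), pv_ne k m c hc _ _ _ _⟩
        exact three_mem_pair m1 m2 m3 (pv_ne k m c hc _ _ _ _)
          (pv1_ne_pv1 k m c hc (Or.inr hxx)) (fun h => pv_ne k m c hc _ _ _ _ h.symm)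
  · -- i ≠ i' : disjoint pairs
    have d11 : u1 ≠ w1 := pv1_ne_pv1 k m c hc (Or.inl hii)
    have d22 : u2 ≠ w2 := pv2_ne_pv2 k m c hc (Or.inl hii)
    have m1 : u1 ∈ ({a, b} : Finset (Vt k m)) := by
      rw [memsd]
      left
      refine ⟨by simp, ?_⟩
      simp only [Finset.mem_insert, Finset.mem_singleton, not_or]
      exact ⟨d11, pv_ne k m c hc _ _ _ _⟩
    have m2 : u2 ∈ ({a, b} : Finset (Vt k m)) := by
      rw [memsd]
      left
      refine ⟨by simp, ?_⟩
      simp only [Finset.mem_insert, Finset.mem_singleton, not_or]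
      exact ⟨fun h => pv_ne k m c hc _ _ _ _ h.symm, d22⟩
    have m3 : w1 ∈ ({a, b} : Finset (Vt k m)) := by
      rw [memsd]
      right
      refine ⟨by simp, ?_⟩
      simp only [Finset.mem_insert, Finset.mem_singleton, not_or]
      exact ⟨Ne.symm d11, pv_ne k m c hc _ _ _ _⟩
    exact three_mem_pair m1 m2 m3 (pv_ne k m c hc _ _ _ _) d11
      (fun h => pv_ne k m c hc _ _ _ _ h.symm)

lemma lower_card (hc : k = c + c) : (Finset.image (pf k m c hc) Finset.univ).card = c * (m * m) := by
  rw [Finset.card_image_of_injective _ (pf_inj k m c hc), Finset.card_univ]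
  simp

end LB


theorem stmt8 (k m : ℕ) (hk : Even k) (hk0 : 0 < k) (hm0 : 0 < m) :
    2 * k * indepNum
        (tokenGraph (SimpleGraph.completeMultipartiteGraph (fun _ : Fin k => Fin m)) 2)
      = (k * m) ^ 2 := by
  classical
  obtain ⟨c, hc⟩ := hk
  set G := tokenGraph (SimpleGraph.completeMultipartiteGraph (fun _ : Fin k => Fin m)) 2 with hG
  have hup : indepNum G ≤ c * (m * m) := by
    rw [indepNum]
    apply Finset.sup_le
    intro t _
    split_ifs with ht
    · have h2 := upper k m t ht
      have h3 : k * m * m = 2 * (c * (m * m)) := by rw [hc]; ring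
      omega
    · omega
  have hlo : c * (m * m) ≤ indepNum G := by
    have h1 := Finset.le_sup (f := fun s : Finset {t : Finset ((_ : Fin k) × Fin m) // t.card = 2}
        => if IndepSet G ↑s then s.card else 0)
      (Finset.mem_univ (Finset.image (pf k m c hc) Finset.univ))
    have hind : IndepSet G ↑(Finset.image (pf k m c hc) Finset.univ) := lower_indep k m c hc
    simp only [if_pos hind, lower_card k m c hc] at h1
    exact h1
  have heq : indepNum G = c * (m * m) := le_antisymm hup hlo
  rw [heq, hc]
  ring
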